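/- Let p be a noncrossing partition of k upper and l lower points. Then there exists a unique pair (p_l, p_u) of building partitions such that p = p_l* ∘ p_u, where a building partition is a partition all of whose lower points are in distinct blocks, each lower point is connected to at least one upper point, and the minimal upper points connected to the lower points are strictly increasing from left to right. -/

import Mathlib

/-- Reflection of a partition: exchange the upper and lower rows. -/
def sreflect {k l : ℕ} (p : Setoid (Fin k ⊕ Fin l)) : Setoid (Fin l ⊕ Fin k) :=
  Setoid.comap Sum.swap p

/-- Vertical concatenation `q ∘ p` (`p` on top): the lower points of `p` are
identified with the upper points of `q`, the join of the induced partitions is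
taken and restricted to the outer rows. -/
def scomp {k l m : ℕ} (p : Setoid (Fin k ⊕ Fin l)) (q : Setoid (Fin l ⊕ Fin m)) :
    Setoid (Fin k ⊕ Fin m) :=
  Setoid.comap (Sum.map id Sum.inr)
    (Relation.EqvGen.setoid (fun x y : Fin k ⊕ (Fin l ⊕ Fin m) =>
      (∃ a b, p.r a b ∧ Sum.map id Sum.inl a = x ∧ Sum.map id Sum.inl b = y) ∨
      (∃ a b, q.r a b ∧ (Sum.inr a : Fin k ⊕ (Fin l ⊕ Fin m)) = x ∧ Sum.inr b = y)))

/-- Position of a point in the counterclockwise planar order: the upper points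
`1, …, k` followed by the lower points in reversed order. -/
def ptIdx {k l : ℕ} : Fin k ⊕ Fin l → ℕ :=
  Sum.elim (fun i => (i : ℕ)) (fun j => k + (l - 1 - (j : ℕ)))

/-- A partition is noncrossing if its strings can be drawn without crossings. -/
def NonCrossingS {k l : ℕ} (p : Setoid (Fin k ⊕ Fin l)) : Prop :=
  ∀ a b c d : Fin k ⊕ Fin l,
    ptIdx a < ptIdx b → ptIdx b < ptIdx c → ptIdx c < ptIdx d →
    p.r a c → p.r b d → p.r a b

/-- A building partition: all lower points lie in pairwise distinct blocks, every
lower point is connected to some upper point, and the minimal upper points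
`min_up` attached to the lower points are strictly increasing. -/
def IsBuilding {k t : ℕ} (q : Setoid (Fin k ⊕ Fin t)) : Prop :=
  (∀ j j' : Fin t, q.r (Sum.inr j) (Sum.inr j') → j = j') ∧
    ∃ f : Fin t → Fin k, StrictMono f ∧
      ∀ j : Fin t, q.r (Sum.inl (f j)) (Sum.inr j) ∧
        ∀ i : Fin k, q.r (Sum.inl i) (Sum.inr j) → f j ≤ i

section Join
open Sum

variable {k t l : ℕ} (q : Setoid (Fin k ⊕ Fin t)) (s : Setoid (Fin t ⊕ Fin l))

/-- Explicit description of the join of `q` and `s` along the middle row. -/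
def Jr : (Fin k ⊕ (Fin t ⊕ Fin l)) → (Fin k ⊕ (Fin t ⊕ Fin l)) → Prop
  | inl i, inl i' => q.r (inl i) (inl i')
  | inl i, inr (inl j) => q.r (inl i) (inr j)
  | inl i, inr (inr x) => ∃ j, q.r (inl i) (inr j) ∧ s.r (inl j) (inr x)
  | inr (inl j), inl i => q.r (inl i) (inr j)
  | inr (inl j), inr (inl j') => j = j'
  | inr (inl j), inr (inr x) => s.r (inl j) (inr x)
  | inr (inr x), inl i => ∃ j, q.r (inl i) (inr j) ∧ s.r (inl j) (inr x)
  | inr (inr x), inr (inl j) => s.r (inl j) (inr x)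
  | inr (inr x), inr (inr y) => s.r (inr x) (inr y)

variable {q s}
variable (hq : ∀ j j' : Fin t, q.r (inr j) (inr j') → j = j')
  (hs : ∀ j j' : Fin t, s.r (inl j) (inl j') → j = j')

include hq hs in
theorem Jr_equivalence : Equivalence (Jr q s) := by
  constructor
  · rintro (i | j | x)
    · exact q.iseqv.refl _
    · rfl
    · exact s.iseqv.refl _
  · rintro (i | j | x) (i' | j' | y) h
    · exact q.iseqv.symm h
    · exact h
    · exact h
    · exact h
    · exact h.symm
    · exact h
    · exact h
    · exact h
    · exact s.iseqv.symm h
  · rintro (i | j | x) (i' | j' | y) (i'' | j'' | z) h1 h2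
    · exact q.iseqv.trans h1 h2
    · exact q.iseqv.trans h1 h2
    · obtain ⟨j, a, b⟩ := h2
      exact ⟨j, q.iseqv.trans h1 a, b⟩
    · exact q.iseqv.trans h1 (q.iseqv.symm h2)
    · exact h2 ▸ h1
    · exact ⟨j', h1, h2⟩
    · obtain ⟨j, a, b⟩ := h1
      obtain ⟨j2, c, d⟩ := h2
      obtain rfl : j = j2 := hs _ _ (s.iseqv.trans b (s.iseqv.symm d))
      exact q.iseqv.trans a (q.iseqv.symm c)
    · obtain ⟨j, a, b⟩ := h1
      obtain rfl : j = j'' := hs _ _ (s.iseqv.trans b (s.iseqv.symm h2))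
      exact a
    · obtain ⟨j, a, b⟩ := h1
      exact ⟨j, a, s.iseqv.trans b h2⟩
    · exact q.iseqv.trans (q.iseqv.symm h2) h1
    · exact hq _ _ (q.iseqv.trans (q.iseqv.symm h1) h2)
    · obtain ⟨j2, c, d⟩ := h2
      obtain rfl : j = j2 := hq _ _ (q.iseqv.trans (q.iseqv.symm h1) c)
      exact d
    · exact h1 ▸ h2
    · exact h1.trans h2
    · exact h1 ▸ h2
    · obtain ⟨j2, c, d⟩ := h2
      obtain rfl : j2 = j := hs _ _ (s.iseqv.trans d (s.iseqv.symm h1))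
      exact c
    · exact hs _ _ (s.iseqv.trans h1 (s.iseqv.symm h2))
    · exact s.iseqv.trans h1 h2
    · obtain ⟨j, a, b⟩ := h1
      exact ⟨j, q.iseqv.trans (q.iseqv.symm h2) a, b⟩
    · obtain ⟨j, a, b⟩ := h1
      obtain rfl : j = j'' := hq _ _ (q.iseqv.trans (q.iseqv.symm a) h2)
      exact b
    · obtain ⟨j, a, b⟩ := h1
      obtain ⟨j2, c, d⟩ := h2
      obtain rfl : j = j2 := hq _ _ (q.iseqv.trans (q.iseqv.symm a) c)
      exact s.iseqv.trans (s.iseqv.symm b) d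
    · exact ⟨j', h2, h1⟩
    · exact h2 ▸ h1
    · exact s.iseqv.trans (s.iseqv.symm h1) h2
    · obtain ⟨j, c, d⟩ := h2
      exact ⟨j, c, s.iseqv.trans d (s.iseqv.symm h1)⟩
    · exact s.iseqv.trans h2 (s.iseqv.symm h1)
    · exact s.iseqv.trans h1 h2

include hq hs in
theorem scomp_le {x y : Fin k ⊕ Fin l} (h : (scomp q s).r x y) :
    Jr q s (Sum.map id Sum.inr x) (Sum.map id Sum.inr y) := by
  have key : Relation.EqvGen.setoid (fun x y : Fin k ⊕ (Fin t ⊕ Fin l) =>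
      (∃ a b, q.r a b ∧ Sum.map id Sum.inl a = x ∧ Sum.map id Sum.inl b = y) ∨
      (∃ a b, s.r a b ∧ (Sum.inr a : Fin k ⊕ (Fin t ⊕ Fin l)) = x ∧ Sum.inr b = y)) ≤
      (⟨Jr q s, Jr_equivalence hq hs⟩ : Setoid _) := by
    refine Setoid.eqvGen_le (fun a b hab => ?_)
    rcases hab with ⟨c, d, hcd, rfl, rfl⟩ | ⟨c, d, hcd, rfl, rfl⟩
    · rcases c with i | j <;> rcases d with i' | j'
      · exact hcd
      · exact hcd
      · exact q.iseqv.symm hcd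
      · exact hq _ _ hcd
    · rcases c with j | x <;> rcases d with j' | y
      · exact hs _ _ hcd
      · exact hcd
      · exact s.iseqv.symm hcd
      · exact hcd
  exact key h

include hq hs in
theorem scomp_inl_inl {i i' : Fin k} (h : (scomp q s).r (inl i) (inl i')) :
    q.r (inl i) (inl i') := scomp_le hq hs h

include hq hs in
theorem scomp_inr_inr {x y : Fin l} (h : (scomp q s).r (inr x) (inr y)) :
    s.r (inr x) (inr y) := scomp_le hq hs h

include hq hs in
theorem scomp_inl_inr {i : Fin k} {x : Fin l} (h : (scomp q s).r (inl i) (inr x)) :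
    ∃ j, q.r (inl i) (inr j) ∧ s.r (inl j) (inr x) := scomp_le hq hs h

theorem scomp_of_q {i i' : Fin k} (h : q.r (inl i) (inl i')) :
    (scomp q s).r (inl i) (inl i') := by
  exact Relation.EqvGen.rel _ _ (Or.inl ⟨inl i, inl i', h, rfl, rfl⟩)

theorem scomp_of_s {x y : Fin l} (h : s.r (inr x) (inr y)) :
    (scomp q s).r (inr x) (inr y) := by
  exact Relation.EqvGen.rel _ _ (Or.inr ⟨inr x, inr y, h, rfl, rfl⟩)

theorem scomp_of_qs {i : Fin k} {x : Fin l} {j : Fin t} (h1 : q.r (inl i) (inr j))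
    (h2 : s.r (inl j) (inr x)) : (scomp q s).r (inl i) (inr x) := by
  exact Relation.EqvGen.trans _ (inr (inl j)) _
    (Relation.EqvGen.rel _ _ (Or.inl ⟨inl i, inr j, h1, rfl, rfl⟩))
    (Relation.EqvGen.rel _ _ (Or.inr ⟨inl j, inr x, h2, rfl, rfl⟩))

end Join

section Lead
open Sum

variable {k l : ℕ}

open Classical in
/-- The set of leaders: minimal upper representatives of the through-blocks. -/
noncomputable def leadF (p : Setoid (Fin k ⊕ Fin l)) : Finset (Fin k) :=
  Finset.univ.filter (fun i =>
    (∃ x, p.r (inl i) (inr x)) ∧ ∀ i', p.r (inl i') (inl i) → i ≤ i')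

theorem mem_leadF {p : Setoid (Fin k ⊕ Fin l)} {i : Fin k} :
    i ∈ leadF p ↔ (∃ x, p.r (inl i) (inr x)) ∧ ∀ i', p.r (inl i') (inl i) → i ≤ i' := by
  classical
  simp [leadF]

theorem leadF_eq {p : Setoid (Fin k ⊕ Fin l)} {i i' : Fin k} (hi : i ∈ leadF p)
    (hi' : i' ∈ leadF p) (h : p.r (inl i) (inl i')) : i = i' :=
  le_antisymm ((mem_leadF.1 hi).2 i' (p.iseqv.symm h)) ((mem_leadF.1 hi').2 i h)

/-- Number of through-blocks. -/
noncomputable def tb (p : Setoid (Fin k ⊕ Fin l)) : ℕ := (leadF p).card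

/-- The increasing enumeration of leaders. -/
noncomputable def leadE (p : Setoid (Fin k ⊕ Fin l)) : Fin (tb p) ↪o Fin k :=
  (leadF p).orderEmbOfFin rfl

theorem leadE_mem (p : Setoid (Fin k ⊕ Fin l)) (j : Fin (tb p)) : leadE p j ∈ leadF p :=
  Finset.orderEmbOfFin_mem _ _ _

/-- Every through point lies in the block of a (unique) leader. -/
theorem exists_leadE {p : Setoid (Fin k ⊕ Fin l)} {i : Fin k} {x : Fin l}
    (h : p.r (inl i) (inr x)) : ∃ j, p.r (inl (leadE p j)) (inl i) := by
  classical
  set B : Finset (Fin k) := Finset.univ.filter (fun i' => p.r (inl i') (inl i)) with hB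
  have hne : B.Nonempty := ⟨i, by simp [hB, p.iseqv.refl]⟩
  set i0 := B.min' hne with hi0
  have hi0B : i0 ∈ B := B.min'_mem hne
  have hi0r : p.r (inl i0) (inl i) := by simpa [hB] using hi0B
  have hi0lead : i0 ∈ leadF p := by
    refine mem_leadF.2 ⟨⟨x, p.iseqv.trans hi0r h⟩, fun i' hi' => ?_⟩
    exact B.min'_le i' (by simp [hB, p.iseqv.trans hi' hi0r])
  have : i0 ∈ Set.range (leadE p) := by
    show i0 ∈ Set.range ((leadF p).orderEmbOfFin (rfl : (leadF p).card = tb p))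
    rw [Finset.range_orderEmbOfFin]; exact hi0lead
  obtain ⟨j, hj⟩ := this
  exact ⟨j, by rw [hj]; exact hi0r⟩

/-- The canonical upper building partition. -/
noncomputable def pUp (p : Setoid (Fin k ⊕ Fin l)) : Setoid (Fin k ⊕ Fin (tb p)) :=
  Setoid.comap (Sum.elim inl (fun j => inl (leadE p j))) p

/-- The canonical lower building partition. -/
noncomputable def pLow (p : Setoid (Fin k ⊕ Fin l)) : Setoid (Fin l ⊕ Fin (tb p)) :=
  Setoid.comap (Sum.elim inr (fun j => inl (leadE p j))) p

theorem pUp_hq (p : Setoid (Fin k ⊕ Fin l)) :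
    ∀ j j' : Fin (tb p), (pUp p).r (inr j) (inr j') → j = j' := fun j j' h =>
  (leadE p).injective (leadF_eq (leadE_mem p j) (leadE_mem p j') h)

theorem sreflect_pLow_hs (p : Setoid (Fin k ⊕ Fin l)) :
    ∀ j j' : Fin (tb p), (sreflect (pLow p)).r (inl j) (inl j') → j = j' := fun j j' h =>
  (leadE p).injective (leadF_eq (leadE_mem p j) (leadE_mem p j') h)

end Lead

section Main
open Sum

variable {k l : ℕ} (p : Setoid (Fin k ⊕ Fin l))

theorem pUp_building : IsBuilding (pUp p) := by
  refine ⟨pUp_hq p, fun j => leadE p j, (leadE p).strictMono, fun j => ⟨p.iseqv.refl _, ?_⟩⟩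
  intro i hi
  exact (mem_leadF.1 (leadE_mem p j)).2 i hi

theorem pLow_building (hp : NonCrossingS p) : IsBuilding (pLow p) := by
  classical
  have hLne : ∀ j : Fin (tb p), (Finset.univ.filter
      (fun x : Fin l => p.r (inl (leadE p j)) (inr x))).Nonempty := by
    intro j
    obtain ⟨x, hx⟩ := (mem_leadF.1 (leadE_mem p j)).1
    exact ⟨x, by simp [hx]⟩
  set g : Fin (tb p) → Fin l := fun j => Finset.min' _ (hLne j) with hg
  have hgmem : ∀ j, p.r (inl (leadE p j)) (inr (g j)) := by
    intro j
    have := Finset.min'_mem _ (hLne j)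
    simpa [hg] using this
  have hgle : ∀ j x, p.r (inl (leadE p j)) (inr x) → g j ≤ x := by
    intro j x hx
    exact Finset.min'_le _ x (by simp [hx])
  have hgmono : StrictMono g := by
    intro j j' hjj
    have hee : (leadE p j : ℕ) < leadE p j' := (leadE p).strictMono hjj
    have hne : leadE p j ≠ leadE p j' := fun h => absurd ((leadE p).injective h) (ne_of_lt hjj)
    have hblocks : ¬ p.r (inl (leadE p j)) (inl (leadE p j')) := fun h =>
      hne (leadF_eq (leadE_mem p j) (leadE_mem p j') h)
    rcases lt_trichotomy (g j) (g j') with h | h | h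
    · exact h
    · exfalso
      exact hblocks (p.iseqv.trans (hgmem j) (h ▸ p.iseqv.symm (hgmem j')))
    · exfalso
      refine hblocks (hp (inl (leadE p j)) (inl (leadE p j'))
        (inr (g j)) (inr (g j')) ?_ ?_ ?_ (hgmem j) (hgmem j'))
      · exact hee
      · have : (leadE p j' : ℕ) < k := (leadE p j').isLt
        simp only [ptIdx, Sum.elim_inl, Sum.elim_inr]
        omega
      · have h1 : (g j : ℕ) < l := (g j).isLt
        have h2 : (g j' : ℕ) < (g j : ℕ) := h
        simp only [ptIdx, Sum.elim_inr]
        omega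
  refine ⟨fun j j' h => (leadE p).injective (leadF_eq (leadE_mem p j) (leadE_mem p j') h),
    g, hgmono, fun j => ⟨p.iseqv.symm (hgmem j), fun x hx => hgle j x (p.iseqv.symm hx)⟩⟩

theorem p_eq_scomp : p = scomp (pUp p) (sreflect (pLow p)) := by
  have hq := pUp_hq p
  have hs := sreflect_pLow_hs p
  refine Setoid.ext fun a b => ?_
  constructor
  · rcases a with i | x <;> rcases b with i' | y
    · exact fun h => scomp_of_q (q := pUp p) (s := sreflect (pLow p)) h
    · intro h
      obtain ⟨j, hj⟩ := exists_leadE (p := p) h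
      exact scomp_of_qs (p.iseqv.symm hj) (p.iseqv.trans hj h)
    · intro h
      obtain ⟨j, hj⟩ := exists_leadE (p := p) (p.iseqv.symm h)
      exact (scomp (pUp p) (sreflect (pLow p))).iseqv.symm
        (scomp_of_qs (p.iseqv.symm hj) (p.iseqv.trans hj (p.iseqv.symm h)))
    · exact fun h => scomp_of_s (q := pUp p) (s := sreflect (pLow p)) h
  · rcases a with i | x <;> rcases b with i' | y
    · exact fun h => scomp_inl_inl hq hs h
    · intro h
      obtain ⟨j, h1, h2⟩ := scomp_inl_inr hq hs h
      exact p.iseqv.trans h1 h2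
    · intro h
      obtain ⟨j, h1, h2⟩ := scomp_inl_inr hq hs
        ((scomp (pUp p) (sreflect (pLow p))).iseqv.symm h)
      exact p.iseqv.symm (p.iseqv.trans h1 h2)
    · exact fun h => scomp_inr_inr hq hs h

end Main

open Sum

/-- every noncrossing partition `p` of `k` upper and `l` lower
points admits a unique through-block decomposition `p = p_l* ∘ p_u` with `p_l`,
`p_u` building partitions. -/
theorem throughBlock_decomposition (k l : ℕ) (p : Setoid (Fin k ⊕ Fin l))
    (hp : NonCrossingS p) :
    ∃! d : Σ t : ℕ, Setoid (Fin l ⊕ Fin t) × Setoid (Fin k ⊕ Fin t),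
      IsBuilding d.2.1 ∧ IsBuilding d.2.2 ∧ p = scomp d.2.2 (sreflect d.2.1) := by
  refine ⟨⟨tb p, (pLow p, pUp p)⟩, ⟨pLow_building p hp, pUp_building p, p_eq_scomp p⟩, ?_⟩
  rintro ⟨t', ql, qu⟩ ⟨hql, hqu, hpe⟩
  have hq : ∀ j j' : Fin t', qu.r (inr j) (inr j') → j = j' := hqu.1
  have hs : ∀ j j' : Fin t', (sreflect ql).r (inl j) (inl j') → j = j' := fun j j' h =>
    hql.1 j j' h
  obtain ⟨f', hf'mono, hf'⟩ := hqu.2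
  obtain ⟨g', hg'mono, hg'⟩ := hql.2
  -- transfer of relations through the decomposition
  have ha : ∀ i i' : Fin k, p.r (inl i) (inl i') ↔ qu.r (inl i) (inl i') := by
    intro i i'
    constructor
    · intro h
      rw [hpe] at h
      exact scomp_inl_inl hq hs h
    · intro h
      rw [hpe]
      exact scomp_of_q h
  have hb : ∀ x y : Fin l, p.r (inr x) (inr y) ↔ ql.r (inl x) (inl y) := by
    intro x y
    constructor
    · intro h
      rw [hpe] at h
      exact scomp_inr_inr hq hs h
    · intro h
      rw [hpe]
      exact scomp_of_s (q := qu) (s := sreflect ql) h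
  have hc : ∀ (i : Fin k) (x : Fin l), p.r (inl i) (inr x) ↔
      ∃ j, qu.r (inl i) (inr j) ∧ ql.r (inl x) (inr j) := by
    intro i x
    constructor
    · intro h
      rw [hpe] at h
      obtain ⟨j, h1, h2⟩ := scomp_inl_inr hq hs h
      exact ⟨j, h1, ql.iseqv.symm h2⟩
    · rintro ⟨j, h1, h2⟩
      rw [hpe]
      exact scomp_of_qs h1 (show ql.r (inr j) (inl x) from ql.iseqv.symm h2)
  -- the images of f' are exactly the leaders
  have hlead : ∀ j : Fin t', f' j ∈ leadF p := by
    intro j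
    refine mem_leadF.2 ⟨⟨g' j, (hc _ _).2 ⟨j, (hf' j).1, (hg' j).1⟩⟩, fun i' hi' => ?_⟩
    have h1 : qu.r (inl i') (inl (f' j)) := (ha _ _).1 hi'
    exact (hf' j).2 i' (qu.iseqv.trans h1 (hf' j).1)
  have himg : Finset.univ.image f' = leadF p := by
    apply Finset.Subset.antisymm
    · intro i hi
      obtain ⟨j, _, rfl⟩ := Finset.mem_image.1 hi
      exact hlead j
    · intro i hi
      obtain ⟨x, hx⟩ := (mem_leadF.1 hi).1
      obtain ⟨j, h1, h2⟩ := (hc _ _).1 hx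
      have h3 : qu.r (inl (f' j)) (inl i) := qu.iseqv.trans (hf' j).1 (qu.iseqv.symm h1)
      have h4 : i ≤ f' j := (mem_leadF.1 hi).2 (f' j) ((ha _ _).2 h3)
      have h5 : f' j ≤ i := (hf' j).2 i h1
      have : i = f' j := le_antisymm h4 h5
      exact Finset.mem_image.2 ⟨j, Finset.mem_univ j, this.symm⟩
  have ht : t' = tb p := by
    have := Finset.card_image_of_injective Finset.univ hf'mono.injective
    rw [himg] at this
    simpa [tb] using this.symm
  subst ht
  have hf'e : f' = ⇑(leadE p) := Finset.orderEmbOfFin_unique rfl hlead hf'mono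
  -- identify qu with pUp p
  have hqueq : qu = pUp p := by
    refine Setoid.ext fun a b => ?_
    have key : ∀ (i : Fin k) (j : Fin (tb p)),
        qu.r (inl i) (inr j) ↔ p.r (inl i) (inl (leadE p j)) := by
      intro i j
      constructor
      · intro h
        have h1 : qu.r (inl i) (inl (f' j)) := qu.iseqv.trans h (qu.iseqv.symm (hf' j).1)
        rw [hf'e] at h1
        exact (ha _ _).2 h1
      · intro h
        have h1 : qu.r (inl i) (inl (f' j)) := by rw [hf'e]; exact (ha _ _).1 h
        exact qu.iseqv.trans h1 (hf' j).1
    rcases a with i | j <;> rcases b with i' | j'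
    · exact ((ha i i').symm : _)
    · exact key i j'
    · constructor
      · intro h
        exact p.iseqv.symm ((key i' j).1 (qu.iseqv.symm h))
      · intro h
        exact qu.iseqv.symm ((key i' j).2 (p.iseqv.symm h))
    · constructor
      · intro h
        obtain rfl := hq _ _ h
        exact p.iseqv.refl _
      · intro h
        have : leadE p j = leadE p j' :=
          leadF_eq (leadE_mem p j) (leadE_mem p j') h
        obtain rfl := (leadE p).injective this
        exact qu.iseqv.refl _
  -- identify ql with pLow p
  have hqleq : ql = pLow p := by
    refine Setoid.ext fun a b => ?_
    have key : ∀ (x : Fin l) (j : Fin (tb p)),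
        ql.r (inl x) (inr j) ↔ p.r (inr x) (inl (leadE p j)) := by
      intro x j
      constructor
      · intro h
        have h1 : qu.r (inl (leadE p j)) (inr j) := by rw [← hf'e]; exact (hf' j).1
        exact p.iseqv.symm ((hc _ _).2 ⟨j, h1, h⟩)
      · intro h
        obtain ⟨j1, h1, h2⟩ := (hc _ _).1 (p.iseqv.symm h)
        have h3 : qu.r (inl (f' j1)) (inl (leadE p j)) :=
          qu.iseqv.trans (hf' j1).1 (qu.iseqv.symm h1)
        have h4 : p.r (inl (f' j1)) (inl (leadE p j)) := (ha _ _).2 h3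
        rw [hf'e] at h4
        have : leadE p j1 = leadE p j :=
          leadF_eq (leadE_mem p j1) (leadE_mem p j) h4
        obtain rfl := (leadE p).injective this
        exact h2
    rcases a with x | j <;> rcases b with y | j'
    · exact ((hb x y).symm : _)
    · exact key x j'
    · constructor
      · intro h
        exact p.iseqv.symm ((key y j).1 (ql.iseqv.symm h))
      · intro h
        exact ql.iseqv.symm ((key y j).2 (p.iseqv.symm h))
    · constructor
      · intro h
        obtain rfl := hql.1 _ _ h
        exact p.iseqv.refl _
      · intro h
        have : leadE p j = leadE p j' :=
          leadF_eq (leadE_mem p j) (leadE_mem p j') h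
        obtain rfl := (leadE p).injective this
        exact ql.iseqv.refl _
  rw [hqleq, hqueq]
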